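/- Let d ≥ 1 be an integer, α ∈ (0,2) and p ∈ (d/(d+α), 1+α/d). Then for every t > 0: ∫₀^t ∫_{ℝ^d} g(s,y)^p dy ds = (κ_{d,α}^p·π^{d/2}/(1−(p−1)d/α))·(Γ(p(d+α)/2 − d/2)/Γ(p(d+α)/2))·t^{1−(p−1)d/α}. -/

import Mathlib

open MeasureTheory Real

/-- `κ_{d,α} = Γ((d+α)/2)/(π^{d/2} Γ(α/2))`. -/
noncomputable def kappaD (d : ℕ) (α : ℝ) : ℝ :=
  Real.Gamma (((d:ℝ) + α) / 2) / (Real.pi ^ ((d:ℝ) / 2) * Real.Gamma (α / 2))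

/-- `g(t,x) = κ_{d,α} t / (t^{2/α} + |x|²)^{(d+α)/2}`. -/
noncomputable def gKer (d : ℕ) (α : ℝ) (t : ℝ) (x : EuclideanSpace ℝ (Fin d)) : ℝ :=
  kappaD d α * t / (t ^ (2/α) + ‖x‖ ^ 2) ^ (((d:ℝ) + α) / 2)

open Set


lemma integrable_gauss (d : ℕ) {b : ℝ} (hb : 0 < b) :
    Integrable (fun x : EuclideanSpace ℝ (Fin d) => Real.exp (-b * ‖x‖^2)) := by
  have h := (GaussianFourier.integrable_cexp_neg_mul_sq_norm_add (V := EuclideanSpace ℝ (Fin d))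
      (b := (b:ℂ)) (by simpa using hb) 0 0).norm
  refine Integrable.congr h (Filter.Eventually.of_forall fun x => ?_)
  simp [Complex.norm_exp, ← Complex.ofReal_pow]

lemma gauss_value (d : ℕ) {b : ℝ} (hb : 0 < b) :
    ∫ x : EuclideanSpace ℝ (Fin d), Real.exp (-b * ‖x‖^2) = (π / b) ^ ((d:ℝ)/2) := by
  rw [GaussianFourier.integral_rexp_neg_mul_sq_norm hb]
  simp [finrank_euclideanSpace_fin]

lemma integral_one_add_norm_sq (d : ℕ) {s : ℝ} (hs : (d:ℝ)/2 < s) :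
    ∫ x : EuclideanSpace ℝ (Fin d), ((1:ℝ) + ‖x‖^2) ^ (-s)
      = π ^ ((d:ℝ)/2) * Real.Gamma (s - (d:ℝ)/2) / Real.Gamma s := by
  have hs0 : 0 < s := lt_of_le_of_lt (by positivity) hs
  set E := EuclideanSpace ℝ (Fin d)
  set ν : Measure ℝ := volume.restrict (Ioi (0:ℝ)) with hν
  set f : ℝ → E → ℝ := fun u x => u ^ (s-1) * Real.exp (-((1 + ‖x‖^2) * u)) with hf
  -- measurability
  have hmeas : AEStronglyMeasurable (Function.uncurry f) (ν.prod volume) := by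
    apply Measurable.aestronglyMeasurable
    fun_prop
  have hGint : ∀ u : ℝ, u ∈ Ioi (0:ℝ) → Integrable (fun x : E => f u x) := by
    intro u hu
    have h2 := (integrable_gauss d hu).const_mul (u ^ (s-1) * Real.exp (-u))
    refine h2.congr (Filter.Eventually.of_forall fun x => ?_)
    simp only [hf, mul_assoc, ← Real.exp_add]
    ring_nf
  have hinner : ∀ u ∈ Ioi (0:ℝ), ∫ x : E, f u x
      = π ^ ((d:ℝ)/2) * (u ^ (s - (d:ℝ)/2 - 1) * Real.exp (-(1*u))) := by
    intro u hu
    have hu0 : (0:ℝ) < u := hu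
    have : ∫ x : E, f u x = (u ^ (s-1) * Real.exp (-u)) * ∫ x : E, Real.exp (-u * ‖x‖^2) := by
      rw [← integral_const_mul]
      refine integral_congr_ae (Filter.Eventually.of_forall fun x => ?_)
      simp only [hf, mul_assoc, ← Real.exp_add]
      ring_nf
    rw [this, gauss_value d hu0, Real.div_rpow pi_pos.le hu0.le]
    rw [div_eq_mul_inv, ← Real.rpow_neg hu0.le, one_mul]
    rw [show s - (d:ℝ)/2 - 1 = (s-1) + (-((d:ℝ)/2)) by ring, Real.rpow_add hu0]
    ring
  have hsd : 0 < s - (d:ℝ)/2 := by linarith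
  have hbase : IntegrableOn (fun u : ℝ => π ^ ((d:ℝ)/2) * (u ^ (s - (d:ℝ)/2 - 1) * Real.exp (-(1*u)))) (Ioi (0:ℝ)) := by
    refine MeasureTheory.IntegrableOn.congr_fun
      ((Real.GammaIntegral_convergent hsd).const_mul (π ^ ((d:ℝ)/2))) (fun u hu => ?_) measurableSet_Ioi
    simp only [one_mul]
    ring_nf
  have hprod : Integrable (Function.uncurry f) (ν.prod volume) := by
    refine (integrable_prod_iff hmeas).2 ⟨?_, ?_⟩
    · exact (ae_restrict_mem measurableSet_Ioi).mono fun u hu => hGint u hu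
    · refine Integrable.congr hbase (((ae_restrict_mem measurableSet_Ioi).mono fun u hu => ?_))
      have h1 : ∫ x : E, ‖f u x‖ = ∫ x : E, f u x := by
        refine integral_congr_ae (Filter.Eventually.of_forall fun x => ?_)
        have hu0 : (0:ℝ) < u := hu
        have : (0:ℝ) ≤ f u x := by
          simp only [hf]
          positivity
        simp [Real.norm_eq_abs, abs_of_nonneg this]
      simp only [Function.uncurry]
      rw [h1, hinner u hu]
  have hx : ∀ x : E, ∫ u in Ioi (0:ℝ), f u x = Real.Gamma s * ((1:ℝ) + ‖x‖^2) ^ (-s) := by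
    intro x
    have h1 : (0:ℝ) < 1 + ‖x‖^2 := by positivity
    have := integral_rpow_mul_exp_neg_mul_Ioi hs0 h1
    simp only [hf]
    rw [this, one_div, Real.inv_rpow h1.le, ← Real.rpow_neg h1.le, mul_comm]
  have hswap : ∫ u in Ioi (0:ℝ), ∫ x : E, f u x = ∫ x : E, ∫ u in Ioi (0:ℝ), f u x :=
    integral_integral_swap hprod
  have hRHS : ∫ u in Ioi (0:ℝ), ∫ x : E, f u x = π ^ ((d:ℝ)/2) * Real.Gamma (s - (d:ℝ)/2) := by
    rw [setIntegral_congr_fun measurableSet_Ioi (fun u hu => hinner u hu)]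
    rw [MeasureTheory.integral_const_mul]
    rw [show s - (d:ℝ)/2 - 1 = (s - (d:ℝ)/2) - 1 by ring,
      integral_rpow_mul_exp_neg_mul_Ioi hsd one_pos]
    norm_num
  have hLHS : ∫ x : E, ∫ u in Ioi (0:ℝ), f u x
      = Real.Gamma s * ∫ x : E, ((1:ℝ) + ‖x‖^2) ^ (-s) := by
    rw [← MeasureTheory.integral_const_mul]
    exact integral_congr_ae (Filter.Eventually.of_forall fun x => hx x)
  have hΓ : Real.Gamma s ≠ 0 := (Real.Gamma_pos_of_pos hs0).ne'
  have := hRHS.symm.trans (hswap.trans hLHS)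
  rw [eq_div_iff hΓ]
  linarith

lemma integral_a_add_norm_sq (d : ℕ) {a σ : ℝ} (ha : 0 < a) (hσ : (d:ℝ)/2 < σ) :
    ∫ x : EuclideanSpace ℝ (Fin d), (a + ‖x‖^2) ^ (-σ)
      = a ^ ((d:ℝ)/2 - σ) * (π ^ ((d:ℝ)/2) * Real.Gamma (σ - (d:ℝ)/2) / Real.Gamma σ) := by
  have hsq : (0:ℝ) < Real.sqrt a := Real.sqrt_pos.2 ha
  set R : ℝ := (Real.sqrt a)⁻¹ with hR
  have hR0 : 0 < R := by positivity
  have key := MeasureTheory.Measure.integral_comp_smul (volume : Measure (EuclideanSpace ℝ (Fin d)))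
      (fun x => ((1:ℝ) + ‖x‖^2) ^ (-σ)) R
  have hpt : ∀ x : EuclideanSpace ℝ (Fin d),
      ((1:ℝ) + ‖R • x‖^2) ^ (-σ) = a ^ σ * (a + ‖x‖^2) ^ (-σ) := by
    intro x
    have h1 : ‖R • x‖^2 = R^2 * ‖x‖^2 := by
      rw [norm_smul, mul_pow, Real.norm_eq_abs, sq_abs]
    have hRa : R^2 = a⁻¹ := by
      rw [hR, ← Real.sqrt_inv, Real.sq_sqrt (by positivity)]
    have h2 : (1:ℝ) + ‖R • x‖^2 = (a + ‖x‖^2) / a := by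
      rw [h1, hRa]; field_simp
    rw [h2, Real.div_rpow (by positivity) ha.le, div_eq_mul_inv, ← Real.rpow_neg ha.le,
      neg_neg, mul_comm]
  calc ∫ x : EuclideanSpace ℝ (Fin d), (a + ‖x‖^2) ^ (-σ)
      = ∫ x : EuclideanSpace ℝ (Fin d), a ^ (-σ) * ((1:ℝ) + ‖R • x‖^2) ^ (-σ) := by
        refine integral_congr_ae (Filter.Eventually.of_forall fun x => ?_)
        show (a + ‖x‖ ^ 2) ^ (-σ) = a ^ (-σ) * (1 + ‖R • x‖ ^ 2) ^ (-σ)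
        rw [hpt x, ← mul_assoc, ← Real.rpow_add ha, neg_add_cancel, Real.rpow_zero, one_mul]
    _ = a ^ (-σ) * ∫ x : EuclideanSpace ℝ (Fin d), ((1:ℝ) + ‖R • x‖^2) ^ (-σ) :=
        MeasureTheory.integral_const_mul _ _
    _ = a ^ (-σ) * (|(R ^ Module.finrank ℝ (EuclideanSpace ℝ (Fin d)))⁻¹| •
          ∫ x : EuclideanSpace ℝ (Fin d), ((1:ℝ) + ‖x‖^2) ^ (-σ)) := by rw [key]
    _ = a ^ ((d:ℝ)/2 - σ) * (π ^ ((d:ℝ)/2) * Real.Gamma (σ - (d:ℝ)/2) / Real.Gamma σ) := by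
        rw [integral_one_add_norm_sq d hσ, finrank_euclideanSpace_fin, smul_eq_mul, ← mul_assoc]
        congr 1
        rw [hR, inv_pow, inv_inv, abs_of_nonneg (by positivity)]
        rw [show Real.sqrt a = a ^ ((1:ℝ)/2) from Real.sqrt_eq_rpow a, ← Real.rpow_natCast (a ^ ((1:ℝ)/2)) d,
          ← Real.rpow_mul ha.le, ← Real.rpow_add ha]
        congr 1
        ring

lemma kappaD_pos (d : ℕ) {α : ℝ} (hα : 0 < α) : 0 < kappaD d α := by
  have h1 : 0 < Real.Gamma (((d:ℝ) + α) / 2) := Real.Gamma_pos_of_pos (by positivity)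
  have h2 : 0 < Real.Gamma (α / 2) := Real.Gamma_pos_of_pos (by positivity)
  have h3 : (0:ℝ) < π ^ ((d:ℝ)/2) := by positivity
  exact div_pos h1 (by positivity)

lemma inner_integral_value (d : ℕ) (hd : 1 ≤ d) {α : ℝ} (hα : α ∈ Set.Ioo (0:ℝ) 2)
    {p : ℝ} (hp : p ∈ Set.Ioo ((d:ℝ) / ((d:ℝ) + α)) (1 + α / d)) {s : ℝ} (hs : 0 < s) :
    ∫ y : EuclideanSpace ℝ (Fin d), gKer d α s y ^ p
      = kappaD d α ^ p *
          (π ^ ((d:ℝ)/2) * Real.Gamma (p * ((d:ℝ) + α) / 2 - (d:ℝ)/2) /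
            Real.Gamma (p * ((d:ℝ) + α) / 2)) * s ^ (-((p-1) * (d:ℝ) / α)) := by
  have hα0 : 0 < α := hα.1
  have hd0 : (0:ℝ) < d := by exact_mod_cast hd
  have hκ : 0 < kappaD d α := kappaD_pos d hα0
  have hp0 : 0 < p := lt_trans (by positivity) hp.1
  set a : ℝ := s ^ (2/α) with haa
  have ha : 0 < a := Real.rpow_pos_of_pos hs _
  set σ : ℝ := p * ((d:ℝ) + α) / 2 with hσdef
  have hσ : (d:ℝ)/2 < σ := by
    have h1 : (d:ℝ) < p * ((d:ℝ) + α) := by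
      rw [← div_lt_iff₀ (by positivity)] at *
      exact hp.1
    rw [hσdef]; linarith
  have hpt : ∀ y : EuclideanSpace ℝ (Fin d),
      gKer d α s y ^ p = (kappaD d α * s) ^ p * (a + ‖y‖^2) ^ (-σ) := by
    intro y
    have hb : (0:ℝ) < a + ‖y‖^2 := by positivity
    rw [gKer, Real.div_rpow (by positivity) (by positivity),
      ← Real.rpow_mul hb.le, div_eq_mul_inv, ← Real.rpow_neg hb.le]
    congr 2
    rw [hσdef]; ring
  calc ∫ y : EuclideanSpace ℝ (Fin d), gKer d α s y ^ p
      = (kappaD d α * s) ^ p * ∫ y : EuclideanSpace ℝ (Fin d), (a + ‖y‖^2) ^ (-σ) := by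
        rw [← MeasureTheory.integral_const_mul]
        exact integral_congr_ae (Filter.Eventually.of_forall fun y => hpt y)
    _ = (kappaD d α * s) ^ p *
          (a ^ ((d:ℝ)/2 - σ) * (π ^ ((d:ℝ)/2) * Real.Gamma (σ - (d:ℝ)/2) / Real.Gamma σ)) := by
        rw [integral_a_add_norm_sq d ha hσ]
    _ = kappaD d α ^ p *
          (π ^ ((d:ℝ)/2) * Real.Gamma (p * ((d:ℝ) + α) / 2 - (d:ℝ)/2) /
            Real.Gamma (p * ((d:ℝ) + α) / 2)) * s ^ (-((p-1) * (d:ℝ) / α)) := by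
        rw [Real.mul_rpow hκ.le hs.le, haa, ← Real.rpow_mul hs.le, hσdef]
        have hexp : p + 2/α * ((d:ℝ)/2 - p * ((d:ℝ) + α)/2) = -((p-1) * (d:ℝ) / α) := by
          field_simp
          ring
        rw [mul_assoc, ← mul_assoc (s ^ p), ← Real.rpow_add hs, hexp]
        ring


/-- exact value of `∫₀^t ∫ g(s,y)^p dy ds`. -/
theorem g_pow_timespace_integral_value
    (d : ℕ) (hd : 1 ≤ d) (α : ℝ) (hα : α ∈ Set.Ioo (0:ℝ) 2)
    (p : ℝ) (hp : p ∈ Set.Ioo ((d:ℝ) / ((d:ℝ) + α)) (1 + α / d)) (t : ℝ) (ht : 0 < t) :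
    (∫ s in (0:ℝ)..t, ∫ y : EuclideanSpace ℝ (Fin d), gKer d α s y ^ p)
      = kappaD d α ^ p * Real.pi ^ ((d:ℝ)/2) / (1 - (p - 1) * d / α) *
          (Real.Gamma (p * ((d:ℝ) + α) / 2 - (d:ℝ) / 2) / Real.Gamma (p * ((d:ℝ) + α) / 2)) *
          t ^ (1 - (p - 1) * d / α) := by
  have hα0 : 0 < α := hα.1
  have hd0 : (0:ℝ) < d := by exact_mod_cast hd
  set e : ℝ := -((p-1) * (d:ℝ) / α) with he
  set C : ℝ := kappaD d α ^ p *
      (π ^ ((d:ℝ)/2) * Real.Gamma (p * ((d:ℝ) + α) / 2 - (d:ℝ)/2) /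
        Real.Gamma (p * ((d:ℝ) + α) / 2)) with hC
  have he1 : -1 < e := by
    have h1 : p - 1 < α / d := by linarith [hp.2]
    have h2 : (p-1) * d < α := by rwa [lt_div_iff₀ hd0] at h1
    have h3 : (p-1) * d / α < 1 := by rwa [div_lt_one hα0]
    rw [he]; linarith
  have hcongr : (∫ s in (0:ℝ)..t, ∫ y : EuclideanSpace ℝ (Fin d), gKer d α s y ^ p)
      = ∫ s in (0:ℝ)..t, C * s ^ e := by
    refine intervalIntegral.integral_congr_ae (Filter.Eventually.of_forall fun s hs => ?_)
    rw [Set.uIoc_of_le ht.le] at hs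
    rw [inner_integral_value d hd hα hp hs.1, hC, he]
  rw [hcongr, intervalIntegral.integral_const_mul, integral_rpow (Or.inl he1),
    Real.zero_rpow (by linarith : e + 1 ≠ 0), sub_zero]
  have hX : e + 1 = 1 - (p-1) * (d:ℝ) / α := by rw [he]; ring
  rw [hX, hC]
  ring
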